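/- arXiv:2406.00450 — 6 statements merged into one kernel-verified Lean document; each statement's English description precedes it below -/
import Mathlib

section
/- Let n, σ be real numbers with n > 0 and σ > 0, and let p, q be real numbers with p > 1 and q > 1. Set p' = p/(p−1), q' = q/(q−1), and define Γ_c(p,q) := (pq/(pq−1))·max{ 2σ + 4σ/p − (2n+2σ)/(p q') − (n+2σ)/p' , 4σ + 2σ/q − (2n+2σ)/q' − (n+2σ)/(p' q) }. Then Γ_c(p,q) > 0 if and only if max{ (2q+1)/(pq+q−2), (pq+p+1)/(2pq−p−1) } > n/(2σ). -/
/-- Positivity of the exponent `Γ_c(p,q)` from formula (∗) is equivalent to the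
blow-up condition of Theorem 1.3 (case `n > σ`). Here `p' = p/(p−1)`, `q' = q/(q−1)`. -/
theorem stmt_4 (n σ p q : ℝ) (hn : 0 < n) (hσ : 0 < σ) (hp : 1 < p) (hq : 1 < q) :
    (p * q / (p * q - 1)) *
        max (2 * σ + 4 * σ / p - (2 * n + 2 * σ) / (p * (q / (q - 1)))
              - (n + 2 * σ) / (p / (p - 1)))
            (4 * σ + 2 * σ / q - (2 * n + 2 * σ) / (q / (q - 1))
              - (n + 2 * σ) / ((p / (p - 1)) * q)) > 0 ↔
      max ((2 * q + 1) / (p * q + q - 2)) ((p * q + p + 1) / (2 * p * q - p - 1))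
        > n / (2 * σ) := by
  have hp0 : (0:ℝ) < p := by linarith
  have hq0 : (0:ℝ) < q := by linarith
  have hp1 : (0:ℝ) < p - 1 := by linarith
  have hq1 : (0:ℝ) < q - 1 := by linarith
  have hpq0 : (0:ℝ) < p * q := mul_pos hp0 hq0
  have hpq : (0:ℝ) < p * q - 1 := by nlinarith
  have hσ2 : (0:ℝ) < 2 * σ := by linarith
  have hd1 : (0:ℝ) < p * q + q - 2 := by nlinarith
  have hd2 : (0:ℝ) < 2 * (p * q) - p - 1 := by nlinarith
  have hc : (0:ℝ) < p * q / (p * q - 1) := div_pos hpq0 hpq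
  have hA : (2 * σ + 4 * σ / p - (2 * n + 2 * σ) / (p * (q / (q - 1)))
      - (n + 2 * σ) / (p / (p - 1)))
      = (2 * σ * (2 * q + 1) - n * (p * q + q - 2)) / (p * q) := by
    field_simp
    ring
  have hB : (4 * σ + 2 * σ / q - (2 * n + 2 * σ) / (q / (q - 1))
      - (n + 2 * σ) / ((p / (p - 1)) * q))
      = (2 * σ * (p * q + p + 1) - n * (2 * (p * q) - p - 1)) / (p * q) := by
    field_simp
    ring
  have hM : ∀ M : ℝ, (0 < (p * q / (p * q - 1)) * M ↔ 0 < M) := by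
    intro M
    constructor
    · intro h
      by_contra h'
      push_neg at h'
      nlinarith [mul_nonpos_of_nonneg_of_nonpos (le_of_lt hc) h']
    · exact mul_pos hc
  rw [gt_iff_lt, hM, hA, hB, lt_max_iff, lt_div_iff₀ hpq0, lt_div_iff₀ hpq0,
    zero_mul, gt_iff_lt, lt_max_iff, div_lt_div_iff₀ hσ2 hd1, div_lt_div_iff₀ hσ2 (by nlinarith : (0:ℝ) < 2 * p * q - p - 1)]
  constructor
  · rintro (h | h)
    · left; nlinarith
    · right; nlinarith
  · rintro (h | h)
    · left; nlinarith
    · right; nlinarith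
end

section
/- There exists a constant C > 0 such that for every real r > 0 with r ≠ 1/4, every t ≥ 0, and every pair of complex numbers λ₁ ≠ λ₂ with λ₁ + λ₂ = −1 and λ₁·λ₂ = r, one has √r · |(exp(λ₁ t) − exp(λ₂ t))/(λ₁ − λ₂)| ≤ C·(1+t)^{−1/2}. -/
lemma aux_exp1 (u : ℝ) (hu : 0 ≤ u) :
    Real.exp u - Real.exp (-u) ≤ 2 * u * Real.exp u := by
  have h1 := Real.add_one_le_exp (-2 * u)
  have h2 : Real.exp (-u) = Real.exp u * Real.exp (-2 * u) := by
    rw [← Real.exp_add]; ring_nf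
  have h3 : (0:ℝ) < Real.exp u := Real.exp_pos u
  nlinarith [Real.exp_nonneg (-2*u)]

lemma aux_S1 (t : ℝ) (ht : 0 ≤ t) : Real.sqrt (1 + t) * Real.exp (-(t / 2)) ≤ 1 := by
  have h2 : (1 + t) ≤ (Real.exp (t / 2)) ^ 2 := by
    have h := Real.add_one_le_exp t
    have he : (Real.exp (t/2))^2 = Real.exp t := by
      rw [sq, ← Real.exp_add]; ring_nf
    linarith [he.ge]
  have h1 : Real.sqrt (1 + t) ≤ Real.exp (t / 2) :=
    (Real.sqrt_le_sqrt h2).trans_eq (Real.sqrt_sq (Real.exp_nonneg _))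
  calc Real.sqrt (1 + t) * Real.exp (-(t/2)) ≤ Real.exp (t/2) * Real.exp (-(t/2)) :=
        mul_le_mul_of_nonneg_right h1 (Real.exp_nonneg _)
    _ = 1 := by rw [← Real.exp_add]; simp

lemma aux_S2 (t : ℝ) (ht : 0 ≤ t) :
    t * Real.exp (-(t / 8)) * Real.sqrt (1 + t) ≤ 48 := by
  have hA : t * Real.exp (-(t / 16)) ≤ 16 := by
    have h1 := Real.add_one_le_exp (t / 16)
    have h2 : t ≤ 16 * Real.exp (t / 16) := by nlinarith
    calc t * Real.exp (-(t/16)) ≤ (16 * Real.exp (t/16)) * Real.exp (-(t/16)) :=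
          mul_le_mul_of_nonneg_right h2 (Real.exp_nonneg _)
      _ = 16 := by rw [mul_assoc, ← Real.exp_add]; simp
  have hB : Real.sqrt (1 + t) * Real.exp (-(t / 16)) ≤ 3 := by
    have h2 : (1 + t) ≤ (3 * Real.exp (t / 16)) ^ 2 := by
      have h := Real.add_one_le_exp (t / 8)
      have hee : Real.exp (t/16) * Real.exp (t/16) = Real.exp (t/8) := by
        rw [← Real.exp_add]; ring_nf
      have he : (3 * Real.exp (t/16))^2 = 9 * Real.exp (t/8) := by
        rw [← hee]; ring
      nlinarith
    have h1 : Real.sqrt (1 + t) ≤ 3 * Real.exp (t / 16) :=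
      (Real.sqrt_le_sqrt h2).trans_eq (Real.sqrt_sq (by positivity))
    calc Real.sqrt (1+t) * Real.exp (-(t/16)) ≤ (3 * Real.exp (t/16)) * Real.exp (-(t/16)) :=
          mul_le_mul_of_nonneg_right h1 (Real.exp_nonneg _)
      _ = 3 := by rw [mul_assoc, ← Real.exp_add]; simp
  have hsplit : Real.exp (-(t/8)) = Real.exp (-(t/16)) * Real.exp (-(t/16)) := by
    rw [← Real.exp_add]; ring_nf
  calc t * Real.exp (-(t / 8)) * Real.sqrt (1 + t)
      = (t * Real.exp (-(t/16))) * (Real.sqrt (1+t) * Real.exp (-(t/16))) := by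
        rw [hsplit]; ring
    _ ≤ 16 * 3 := by
        apply mul_le_mul hA hB (by positivity) (by norm_num)
    _ = 48 := by norm_num

lemma aux_sqrt_exp (u : ℝ) (hu : 0 ≤ u) : Real.sqrt u * Real.exp (-u) ≤ 1 := by
  have h2 : u ≤ (Real.exp u) ^ 2 := by
    have h := Real.add_one_le_exp u
    have he : (Real.exp u)^2 = Real.exp (2*u) := by
      rw [sq, ← Real.exp_add]; ring_nf
    have h' := Real.add_one_le_exp (2*u)
    linarith
  have h1 : Real.sqrt u ≤ Real.exp u :=
    (Real.sqrt_le_sqrt h2).trans_eq (Real.sqrt_sq (Real.exp_nonneg _))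
  calc Real.sqrt u * Real.exp (-u) ≤ Real.exp u * Real.exp (-u) :=
        mul_le_mul_of_nonneg_right h1 (Real.exp_nonneg _)
    _ = 1 := by rw [← Real.exp_add]; simp

lemma aux_S3 (r t : ℝ) (hr : 0 < r) (hr1 : r ≤ 1) (ht : 0 ≤ t) :
    Real.sqrt r * Real.sqrt (1 + t) * Real.exp (-(r * t)) ≤ 2 := by
  have h1 : Real.sqrt r * Real.sqrt (1 + t) ≤ Real.sqrt r + Real.sqrt (r * t) := by
    rw [← Real.sqrt_mul hr.le]
    have h2 : r * (1 + t) ≤ (Real.sqrt r + Real.sqrt (r * t)) ^ 2 := by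
      have e1 : Real.sqrt r ^ 2 = r := Real.sq_sqrt hr.le
      have e2 : Real.sqrt (r * t) ^ 2 = r * t := Real.sq_sqrt (by positivity)
      nlinarith [Real.sqrt_nonneg r, Real.sqrt_nonneg (r*t)]
    exact (Real.sqrt_le_sqrt h2).trans_eq (Real.sqrt_sq (by positivity))
  have h3 : Real.sqrt r * Real.exp (-(r*t)) ≤ 1 := by
    have : Real.sqrt r ≤ 1 := by
      rw [show (1:ℝ) = Real.sqrt 1 by simp]; exact Real.sqrt_le_sqrt hr1
    have he : Real.exp (-(r*t)) ≤ 1 := Real.exp_le_one_iff.mpr (by nlinarith)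
    nlinarith [Real.sqrt_nonneg r, Real.exp_nonneg (-(r*t))]
  have h4 := aux_sqrt_exp (r * t) (by positivity)
  calc Real.sqrt r * Real.sqrt (1 + t) * Real.exp (-(r * t))
      ≤ (Real.sqrt r + Real.sqrt (r * t)) * Real.exp (-(r * t)) :=
        mul_le_mul_of_nonneg_right h1 (Real.exp_nonneg _)
    _ = Real.sqrt r * Real.exp (-(r*t)) + Real.sqrt (r*t) * Real.exp (-(r*t)) := by ring
    _ ≤ 1 + 1 := add_le_add h3 h4
    _ = 2 := by norm_num

set_option maxHeartbeats 2000000 in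
/-- Uniform multiplier bound `√r·|(e^{λ₁t} − e^{λ₂t})/(λ₁ − λ₂)| ≤ C(1+t)^{−1/2}` for the
roots of `λ² + λ + r = 0`. -/
theorem stmt_11 :
    ∃ C : ℝ, 0 < C ∧
      ∀ r : ℝ, 0 < r → r ≠ 1 / 4 → ∀ t : ℝ, 0 ≤ t →
        ∀ l₁ l₂ : ℂ, l₁ ≠ l₂ → l₁ + l₂ = -1 → l₁ * l₂ = (r : ℂ) →
          Real.sqrt r *
              ‖(Complex.exp (l₁ * t) - Complex.exp (l₂ * t)) / (l₁ - l₂)‖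
            ≤ C * (1 + t) ^ (-(1 / 2) : ℝ) := by
  refine ⟨100, by norm_num, ?_⟩
  intro r hr hr4 t ht l₁ l₂ hne hsum hprod
  have h1t : (0:ℝ) < 1 + t := by linarith
  have hst : 0 < Real.sqrt (1 + t) := Real.sqrt_pos.mpr h1t
  rw [show ((1:ℝ) + t) ^ (-(1/2) : ℝ) = (Real.sqrt (1 + t))⁻¹ by
        rw [Real.rpow_neg h1t.le, ← Real.sqrt_eq_rpow],
      show (100:ℝ) * (Real.sqrt (1 + t))⁻¹ = 100 / Real.sqrt (1 + t) from
        (div_eq_mul_inv _ _).symm,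
      le_div_iff₀ hst]
  -- goal: √r * |...| * √(1+t) ≤ 100
  set w : ℂ := (l₁ - l₂) / 2 with hw
  have hwne : w ≠ 0 := div_ne_zero (sub_ne_zero.mpr hne) two_ne_zero
  have hl1 : l₁ = -(1/2 : ℂ) + w := by rw [hw]; linear_combination hsum / 2
  have hl2 : l₂ = -(1/2 : ℂ) - w := by rw [hw]; linear_combination hsum / 2
  have hw2 : w ^ 2 = ((1/4 - r : ℝ) : ℂ) := by
    rw [hw]; push_cast; linear_combination ((l₁ + l₂ - 1) / 4) * hsum - hprod
  have hdiff : l₁ - l₂ = 2 * w := by rw [hw]; ring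
  have hexpc : Complex.exp (-(t : ℂ) / 2) = ((Real.exp (-(t/2)) : ℝ) : ℂ) := by
    rw [show (-(t:ℂ)/2) = ((-(t/2) : ℝ) : ℂ) by push_cast; ring, Complex.ofReal_exp]
  have hkey : Complex.exp (l₁ * t) - Complex.exp (l₂ * t)
      = ((Real.exp (-(t/2)) : ℝ) : ℂ) * (Complex.exp (w * t) - Complex.exp (-(w * t))) := by
    rw [hl1, hl2, show (-(1/2:ℂ) + w) * t = -(t:ℂ)/2 + w * t by ring,
        show (-(1/2:ℂ) - w) * t = -(t:ℂ)/2 + -(w * t) by ring,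
        Complex.exp_add, Complex.exp_add, hexpc]
    ring
  have hG : ‖(Complex.exp (l₁ * t) - Complex.exp (l₂ * t)) / (l₁ - l₂)‖
      = Real.exp (-(t/2)) * ‖Complex.exp (w * t) - Complex.exp (-(w * t))‖
        / (2 * ‖w‖) := by
    rw [hkey, hdiff, norm_div, norm_mul, norm_mul, Complex.norm_real, Real.norm_eq_abs, Complex.norm_two,
        abs_of_pos (Real.exp_pos _)]
  rw [hG]
  clear_value w
  clear hG hkey hexpc hdiff hl1 hl2 hw
  have him : w.re * w.im = 0 := by
    have h := congrArg Complex.im hw2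
    simp [pow_two, Complex.mul_im] at h
    linarith
  have hre : w.re ^ 2 - w.im ^ 2 = 1/4 - r := by
    have h := congrArg Complex.re hw2
    simp [pow_two, Complex.mul_re] at h
    linear_combination h
  rcases mul_eq_zero.mp him with hx | hy
  · -- complex conjugate roots: w = y i, r > 1/4
    obtain ⟨y, hyw⟩ : ∃ y : ℝ, y = w.im := ⟨_, rfl⟩
    rw [← hyw] at hre
    have hy0 : y ≠ 0 := by
      intro h
      apply hwne
      apply Complex.ext
      · rw [hx, Complex.zero_re]
      · rw [Complex.zero_im, ← hyw, h]
    have hwI : w = (y : ℂ) * Complex.I := by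
      apply Complex.ext
      · simpa using hx
      · simpa using hyw.symm
    have hrgt : r = 1/4 + y ^ 2 := by
      rw [hx] at hre; norm_num at hre; linarith
    have hwt : w * t = ((y * t : ℝ) : ℂ) * Complex.I := by
      rw [hwI]; push_cast; ring
    have hE : Complex.exp (w * t) - Complex.exp (-(w * t))
        = 2 * ((Real.sin (y * t) : ℝ) : ℂ) * Complex.I := by
      rw [hwt, show -(((y * t : ℝ) : ℂ) * Complex.I) = (-((y * t : ℝ) : ℂ)) * Complex.I by ring,
          Complex.exp_mul_I, Complex.exp_mul_I, Complex.cos_neg, Complex.sin_neg,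
          ← Complex.ofReal_sin]
      ring
    have habs : ‖Complex.exp (w * t) - Complex.exp (-(w * t))‖
        = 2 * |Real.sin (y * t)| := by
      rw [hE, norm_mul, norm_mul, Complex.norm_two, Complex.norm_I, Complex.norm_real, Real.norm_eq_abs, mul_one]
    have habsw : ‖w‖ = |y| := by rw [hwI]; simp
    rw [habs, habsw]
    have hyp : (0:ℝ) < |y| := abs_pos.mpr hy0
    rcases le_or_gt r (1/2) with hr2 | hr2
    · -- use |sin(yt)| ≤ |y| t
      have hsin : |Real.sin (y * t)| ≤ |y| * t := by
        calc |Real.sin (y * t)| ≤ |y * t| := Real.abs_sin_le_abs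
          _ = |y| * t := by rw [abs_mul, abs_of_nonneg ht]
      have hA : Real.exp (-(t/2)) * (2 * |Real.sin (y * t)|) / (2 * |y|)
          ≤ t * Real.exp (-(t/2)) := by
        rw [div_le_iff₀ (by positivity)]
        nlinarith [mul_le_mul_of_nonneg_left hsin (Real.exp_nonneg (-(t/2))),
          Real.exp_nonneg (-(t/2))]
      have hr1 : Real.sqrt r ≤ 1 := Real.sqrt_le_one.mpr (by linarith)
      calc Real.sqrt r * (Real.exp (-(t/2)) * (2 * |Real.sin (y * t)|) / (2 * |y|))
            * Real.sqrt (1 + t)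
          ≤ 1 * (t * Real.exp (-(t/2))) * Real.sqrt (1 + t) := by
            apply mul_le_mul_of_nonneg_right _ (Real.sqrt_nonneg _)
            exact mul_le_mul hr1 hA (by positivity) (by norm_num)
        _ = t * Real.exp (-(t/2)) * Real.sqrt (1 + t) := by ring
        _ ≤ t * Real.exp (-(t/8)) * Real.sqrt (1 + t) := by
            apply mul_le_mul_of_nonneg_right _ (Real.sqrt_nonneg _)
            exact mul_le_mul_of_nonneg_left (Real.exp_le_exp.mpr (by linarith)) ht
        _ ≤ 48 := aux_S2 t ht
        _ ≤ 100 := by norm_num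
    · -- use |sin| ≤ 1 and |y| ≥ √r / 2
      have hsin1 : |Real.sin (y * t)| ≤ 1 :=
        abs_le.mpr ⟨Real.neg_one_le_sin _, Real.sin_le_one _⟩
      have h2y : Real.sqrt r ≤ 2 * |y| := by
        have h4 : r ≤ (2 * |y|) ^ 2 := by
          rw [mul_pow, sq_abs]; nlinarith
        calc Real.sqrt r ≤ Real.sqrt ((2 * |y|) ^ 2) := Real.sqrt_le_sqrt h4
          _ = 2 * |y| := Real.sqrt_sq (by positivity)
      have hA : Real.exp (-(t/2)) * (2 * |Real.sin (y * t)|) / (2 * |y|)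
          ≤ Real.exp (-(t/2)) / |y| := by
        rw [div_le_div_iff₀ (by positivity) hyp]
        nlinarith [mul_le_mul_of_nonneg_left hsin1 (Real.exp_nonneg (-(t/2))),
          Real.exp_nonneg (-(t/2))]
      have hyne : |y| ≠ 0 := hyp.ne'
      calc Real.sqrt r * (Real.exp (-(t/2)) * (2 * |Real.sin (y * t)|) / (2 * |y|))
            * Real.sqrt (1 + t)
          ≤ (2 * |y|) * (Real.exp (-(t/2)) / |y|) * Real.sqrt (1 + t) := by
            apply mul_le_mul_of_nonneg_right _ (Real.sqrt_nonneg _)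
            exact mul_le_mul h2y hA (by positivity) (by positivity)
        _ = 2 * (Real.sqrt (1 + t) * Real.exp (-(t/2))) := by field_simp
        _ ≤ 2 * 1 := by nlinarith [aux_S1 t ht]
        _ ≤ 100 := by norm_num
  · -- real roots: w = x real, r < 1/4
    obtain ⟨x, hxw⟩ : ∃ x : ℝ, x = w.re := ⟨_, rfl⟩
    rw [← hxw, hy] at hre
    have hx0 : x ≠ 0 := by
      intro h
      apply hwne
      apply Complex.ext
      · rw [Complex.zero_re, ← hxw, h]
      · rw [hy, Complex.zero_im]
    have hwR : w = (x : ℂ) := by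
      apply Complex.ext
      · simpa using hxw.symm
      · simpa using hy
    have hre' : x ^ 2 = 1/4 - r := by norm_num at hre; linarith
    obtain ⟨a, hadef⟩ : ∃ a : ℝ, a = |x| := ⟨_, rfl⟩
    have ha0 : (0:ℝ) < a := hadef ▸ abs_pos.mpr hx0
    have ha2 : a ^ 2 = 1/4 - r := by rw [hadef, sq_abs]; linarith
    have hrlt : r < 1/4 := by nlinarith
    have hwt : w * t = ((x * t : ℝ) : ℂ) := by rw [hwR]; push_cast; ring
    have hE : Complex.exp (w * t) - Complex.exp (-(w * t))
        = ((Real.exp (x * t) - Real.exp (-(x * t)) : ℝ) : ℂ) := by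
      rw [hwt, show -((x * t : ℝ) : ℂ) = ((-(x * t) : ℝ) : ℂ) by push_cast; ring,
          ← Complex.ofReal_exp, ← Complex.ofReal_exp]
      push_cast
      ring
    have habs : ‖Complex.exp (w * t) - Complex.exp (-(w * t))‖
        = Real.exp (a * t) - Real.exp (-(a * t)) := by
      rw [hE, Complex.norm_real, Real.norm_eq_abs, hadef]
      rcases le_or_gt 0 x with hxs | hxs
      · rw [abs_of_nonneg hxs, abs_of_nonneg]
        have h1 : -(x * t) ≤ x * t := by nlinarith [mul_nonneg hxs ht]
        linarith [Real.exp_le_exp.mpr h1]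
      · rw [abs_of_neg hxs, show -x * t = -(x * t) by ring,
            show -(-(x * t)) = x * t by ring, abs_of_nonpos]
        · ring
        · have h1 : x * t ≤ -(x * t) := by
            nlinarith [mul_nonneg (neg_nonneg.mpr hxs.le) ht]
          linarith [Real.exp_le_exp.mpr h1]
    have habsw : ‖w‖ = a := by rw [hwR, Complex.norm_real, Real.norm_eq_abs, hadef]
    rw [habs, habsw]
    have har : a ≤ 1/2 - r := by nlinarith [ha2, ha0.le, hr]
    have hexpb : Real.exp (-(t/2)) * Real.exp (a * t) ≤ Real.exp (-(r * t)) := by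
      rw [← Real.exp_add]
      apply Real.exp_le_exp.mpr
      nlinarith [mul_nonneg (by linarith : (0:ℝ) ≤ 1/2 - r - a) ht]
    have hD := aux_exp1 (a * t) (by positivity)
    have hDnn : (0:ℝ) ≤ Real.exp (-(t/2)) * (Real.exp (a * t) - Real.exp (-(a * t)))
        / (2 * a) := by
      apply div_nonneg _ (by positivity)
      apply mul_nonneg (Real.exp_nonneg _)
      have h1 : -(a * t) ≤ a * t := by linarith [mul_nonneg ha0.le ht]
      linarith [Real.exp_le_exp.mpr h1]
    rcases le_or_gt (1/8) r with hr8 | hr8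
    · -- 1/8 ≤ r < 1/4
      have hA : Real.exp (-(t/2)) * (Real.exp (a * t) - Real.exp (-(a * t))) / (2 * a)
          ≤ t * Real.exp (-(r * t)) := by
        rw [div_le_iff₀ (by positivity)]
        calc Real.exp (-(t/2)) * (Real.exp (a * t) - Real.exp (-(a * t)))
            ≤ Real.exp (-(t/2)) * (2 * (a * t) * Real.exp (a * t)) :=
              mul_le_mul_of_nonneg_left hD (Real.exp_nonneg _)
          _ = (2 * a * t) * (Real.exp (-(t/2)) * Real.exp (a * t)) := by ring
          _ ≤ (2 * a * t) * Real.exp (-(r * t)) :=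
              mul_le_mul_of_nonneg_left hexpb (by positivity)
          _ = t * Real.exp (-(r * t)) * (2 * a) := by ring
      have hr1 : Real.sqrt r ≤ 1 := Real.sqrt_le_one.mpr (by linarith)
      calc Real.sqrt r * (Real.exp (-(t/2)) * (Real.exp (a * t) - Real.exp (-(a * t)))
              / (2 * a)) * Real.sqrt (1 + t)
          ≤ 1 * (t * Real.exp (-(r * t))) * Real.sqrt (1 + t) := by
            apply mul_le_mul_of_nonneg_right _ (Real.sqrt_nonneg _)
            exact mul_le_mul hr1 hA hDnn (by norm_num)
        _ = t * Real.exp (-(r * t)) * Real.sqrt (1 + t) := by ring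
        _ ≤ t * Real.exp (-(t/8)) * Real.sqrt (1 + t) := by
            apply mul_le_mul_of_nonneg_right _ (Real.sqrt_nonneg _)
            apply mul_le_mul_of_nonneg_left (Real.exp_le_exp.mpr (by nlinarith)) ht
        _ ≤ 48 := aux_S2 t ht
        _ ≤ 100 := by norm_num
    · -- r < 1/8, so 4a ≥ 1
      have h4a : 1 ≤ 4 * a := by nlinarith [ha2, ha0.le]
      have hA : Real.exp (-(t/2)) * (Real.exp (a * t) - Real.exp (-(a * t))) / (2 * a)
          ≤ 2 * Real.exp (-(r * t)) := by
        rw [div_le_iff₀ (by positivity)]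
        calc Real.exp (-(t/2)) * (Real.exp (a * t) - Real.exp (-(a * t)))
            ≤ Real.exp (-(t/2)) * Real.exp (a * t) := by
              nlinarith [Real.exp_pos (-(a * t)), Real.exp_nonneg (-(t/2))]
          _ ≤ Real.exp (-(r * t)) := hexpb
          _ ≤ 2 * Real.exp (-(r * t)) * (2 * a) := by
              nlinarith [Real.exp_pos (-(r * t))]
      calc Real.sqrt r * (Real.exp (-(t/2)) * (Real.exp (a * t) - Real.exp (-(a * t)))
              / (2 * a)) * Real.sqrt (1 + t)
          ≤ Real.sqrt r * (2 * Real.exp (-(r * t))) * Real.sqrt (1 + t) := by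
            apply mul_le_mul_of_nonneg_right _ (Real.sqrt_nonneg _)
            exact mul_le_mul_of_nonneg_left hA (Real.sqrt_nonneg _)
        _ = 2 * (Real.sqrt r * Real.sqrt (1 + t) * Real.exp (-(r * t))) := by ring
        _ ≤ 2 * 2 := by nlinarith [aux_S3 r t hr (by linarith) ht]
        _ ≤ 100 := by norm_num
end

section
/- There exists a constant C > 0 such that for every real r > 0 with r ≠ 1/4, every t ≥ 0, and every pair of complex numbers λ₁ ≠ λ₂ with λ₁ + λ₂ = −1 and λ₁·λ₂ = r, one has |(λ₁·exp(λ₁ t) − λ₂·exp(λ₂ t))/(λ₁ − λ₂)| ≤ C. -/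
private lemma ue_le_one (u : ℝ) (hu : 0 ≤ u) : u * Real.exp (-u) ≤ 1 := by
  have h1 : Real.exp (-u) * Real.exp u = 1 := by rw [← Real.exp_add]; simp
  have h2 := Real.add_one_le_exp u
  have h3 := Real.exp_pos (-u)
  nlinarith

private lemma caseA_pos (δ t : ℝ) (h0 : 0 < δ) (h1 : δ < 1) (ht : 0 ≤ t) :
    |((δ-1)/2 * Real.exp ((δ-1)/2*t) - (-δ-1)/2 * Real.exp ((-δ-1)/2*t)) / δ| ≤ 1 := by
  set a := Real.exp ((δ-1)/2*t) with ha
  set b := Real.exp ((-δ-1)/2*t) with hb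
  have ha0 : 0 < a := Real.exp_pos _
  have hb0 : 0 < b := Real.exp_pos _
  have hb1 : b ≤ 1 := Real.exp_le_one_iff.mpr (by nlinarith)
  have hab : b ≤ a := Real.exp_le_exp.mpr (by nlinarith)
  have hbae : a - b = a * (1 - Real.exp (-(δ*t))) := by
    rw [ha, hb, show (-δ-1)/2*t = (δ-1)/2*t + -(δ*t) by ring, Real.exp_add]; ring
  have h1e : 1 - Real.exp (-(δ*t)) ≤ δ*t := by
    nlinarith [Real.add_one_le_exp (-(δ*t))]
  have hua : a = Real.exp (-((1-δ)*t/2)) := by rw [ha]; ring_nf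
  have hue : ((1-δ)*t/2) * a ≤ 1 := by
    rw [hua]; exact ue_le_one _ (by nlinarith)
  have h3 : a * (1 - Real.exp (-(δ*t))) ≤ a * (δ*t) :=
    mul_le_mul_of_nonneg_left h1e ha0.le
  have h4 : (1-δ)*(a-b) ≤ 2*δ := by
    have h5 : (1-δ)*(a-b) ≤ (1-δ)*(a*(δ*t)) := by
      apply mul_le_mul_of_nonneg_left _ (by linarith)
      linarith [hbae ▸ h3]
    have h6 : (1-δ)*(a*(δ*t)) = 2*δ*(((1-δ)*t/2)*a) := by ring
    nlinarith
  rw [abs_le]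
  constructor
  · rw [le_div_iff₀ h0]; nlinarith
  · rw [div_le_one h0]; nlinarith

private lemma caseA (δ t : ℝ) (h0 : δ ≠ 0) (h1 : |δ| < 1) (ht : 0 ≤ t) :
    |((δ-1)/2 * Real.exp ((δ-1)/2*t) - (-δ-1)/2 * Real.exp ((-δ-1)/2*t)) / δ| ≤ 1 := by
  rcases h0.lt_or_gt with h | h
  · have h1' : -δ < 1 := by rcases abs_lt.mp h1 with ⟨hl, _⟩; linarith
    have := caseA_pos (-δ) t (by linarith) h1' ht
    have e1 : (-δ-1)/2*t = (-(δ)-1)/2*t := by ring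
    have e2 : (δ-1)/2*t = (-(-δ)-1)/2*t := by ring
    rw [show ((δ-1)/2 * Real.exp ((δ-1)/2*t) - (-δ-1)/2 * Real.exp ((-δ-1)/2*t)) / δ
        = ((-δ-1)/2 * Real.exp ((-δ-1)/2*t) - (-(-δ)-1)/2 * Real.exp ((-(-δ)-1)/2*t)) / (-δ) by
      rw [← e2]; ring]
    exact this
  · exact caseA_pos δ t h ((abs_lt.mp h1).2) ht

private lemma caseB (ω t : ℝ) (hω : ω ≠ 0) (ht : 0 ≤ t) :
    |Real.exp (-(t/2)) * (Real.cos (ω*t/2) - Real.sin (ω*t/2)/ω)| ≤ 1 := by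
  have hc : |Real.cos (ω*t/2)| ≤ 1 := Real.abs_cos_le_one _
  have hs : |Real.sin (ω*t/2)/ω| ≤ t/2 := by
    rw [abs_div, div_le_iff₀ (abs_pos.mpr hω)]
    calc |Real.sin (ω*t/2)| ≤ |ω*t/2| := Real.abs_sin_le_abs
      _ = t/2 * |ω| := by
        rw [show ω*t/2 = (t/2)*ω by ring, abs_mul, abs_of_nonneg (by linarith : (0:ℝ) ≤ t/2)]
  have hX : |Real.cos (ω*t/2) - Real.sin (ω*t/2)/ω| ≤ 1 + t/2 := by
    calc |Real.cos (ω*t/2) - Real.sin (ω*t/2)/ω|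
        ≤ |Real.cos (ω*t/2)| + |Real.sin (ω*t/2)/ω| := abs_sub _ _
      _ ≤ 1 + t/2 := by linarith
  have he : Real.exp (-(t/2)) * Real.exp (t/2) = 1 := by rw [← Real.exp_add]; simp
  have he2 := Real.add_one_le_exp (t/2)
  have hep := Real.exp_pos (-(t/2))
  calc |Real.exp (-(t/2)) * (Real.cos (ω*t/2) - Real.sin (ω*t/2)/ω)|
      = Real.exp (-(t/2)) * |Real.cos (ω*t/2) - Real.sin (ω*t/2)/ω| := by
        rw [abs_mul, abs_of_pos hep]
    _ ≤ Real.exp (-(t/2)) * (1 + t/2) := by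
        exact mul_le_mul_of_nonneg_left hX hep.le
    _ ≤ 1 := by nlinarith

private lemma identB (ω t : ℝ) (hω : ω ≠ 0) :
    ((↑ω*Complex.I - 1)/2 * Complex.exp (((↑ω*Complex.I - 1)/2) * (t:ℂ))
      - ((-(↑ω*Complex.I) - 1)/2) * Complex.exp ((((-(↑ω*Complex.I)) - 1)/2) * (t:ℂ)))
      / ((ω:ℂ) * Complex.I)
    = ((Real.exp (-(t/2)) * (Real.cos (ω*t/2) - Real.sin (ω*t/2)/ω) : ℝ) : ℂ) := by
  have key : ∀ x y : ℝ, Complex.exp ((x:ℂ) + (y:ℂ) * Complex.I)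
      = ((Real.exp x : ℝ) : ℂ) * (((Real.cos y : ℝ) : ℂ) + ((Real.sin y : ℝ) : ℂ) * Complex.I) := by
    intro x y
    rw [Complex.exp_add, Complex.exp_mul_I, Complex.ofReal_exp, Complex.ofReal_cos,
      Complex.ofReal_sin]
  have e1 : ((↑ω*Complex.I - 1)/2) * (t:ℂ) = ((-(t/2) : ℝ):ℂ) + ((ω*t/2 : ℝ):ℂ) * Complex.I := by
    push_cast; ring
  have e2 : (((-(↑ω*Complex.I)) - 1)/2) * (t:ℂ)
      = ((-(t/2) : ℝ):ℂ) + ((-(ω*t/2) : ℝ):ℂ) * Complex.I := by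
    push_cast; ring
  rw [e1, e2, key, key]
  rw [div_eq_iff (mul_ne_zero (Complex.ofReal_ne_zero.mpr hω) Complex.I_ne_zero)]
  rw [Real.cos_neg, Real.sin_neg]
  have hωc : (ω:ℂ) ≠ 0 := Complex.ofReal_ne_zero.mpr hω
  field_simp
  push_cast
  field_simp
  ring

/-- Uniform bound `|(λ₁e^{λ₁t} − λ₂e^{λ₂t})/(λ₁ − λ₂)| ≤ C` for the roots of
`λ² + λ + r = 0`. -/
theorem stmt_12 :
    ∃ C : ℝ, 0 < C ∧
      ∀ r : ℝ, 0 < r → r ≠ 1 / 4 → ∀ t : ℝ, 0 ≤ t →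
        ∀ l₁ l₂ : ℂ, l₁ ≠ l₂ → l₁ + l₂ = -1 → l₁ * l₂ = (r : ℂ) →
          ‖(l₁ * Complex.exp (l₁ * t) - l₂ * Complex.exp (l₂ * t)) / (l₁ - l₂)‖
            ≤ C := by
  refine ⟨1, one_pos, ?_⟩
  intro r hr hr4 t ht l₁ l₂ hne hsum hprod
  set μ := l₁ - l₂ with hμdef
  have hμ : μ ≠ 0 := sub_ne_zero.mpr hne
  have hl₁ : l₁ = (μ - 1)/2 := by rw [hμdef]; linear_combination hsum/2
  have hl₂ : l₂ = (-μ - 1)/2 := by rw [hμdef]; linear_combination hsum/2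
  have hsq : μ^2 = 1 - 4*(r:ℂ) := by
    rw [hμdef]; linear_combination (l₁ + l₂ - 1) * hsum - 4 * hprod
  have hre : μ.re*μ.re - μ.im*μ.im = 1 - 4*r := by
    have := congrArg Complex.re hsq
    simpa [pow_two, Complex.mul_re] using this
  have him : μ.re*μ.im + μ.im*μ.re = 0 := by
    have := congrArg Complex.im hsq
    simpa [pow_two, Complex.mul_im] using this
  rcases lt_or_gt_of_ne hr4 with hlt | hgt
  · -- real roots: 1 - 4r > 0
    have him0 : μ.im = 0 := by
      by_contra h
      have hre0 : μ.re = 0 := by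
        have h2 : μ.re * μ.im = 0 := by linarith
        exact (mul_eq_zero.mp h2).resolve_right h
      rw [hre0] at hre
      nlinarith [sq_nonneg μ.im]
    set δ := μ.re with hδ
    have hμδ : μ = (δ:ℂ) := Complex.ext (by simp [hδ]) (by simp [him0])
    have hδsq : δ^2 = 1 - 4*r := by rw [him0] at hre; nlinarith
    have hδ0 : δ ≠ 0 := by
      intro h; apply hμ; rw [hμδ, h]; simp
    have hδ1 : |δ| < 1 := by
      rw [abs_lt]; constructor <;> nlinarith
    have hl₁' : l₁ = ((((δ-1)/2 : ℝ)) : ℂ) := by rw [hl₁, hμδ]; push_cast; ring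
    have hl₂' : l₂ = ((((-δ-1)/2 : ℝ)) : ℂ) := by rw [hl₂, hμδ]; push_cast; ring
    rw [hl₁', hl₂']
    rw [show ((((δ-1)/2 : ℝ)) : ℂ) * (t:ℂ) = (((δ-1)/2*t : ℝ) : ℂ) by push_cast; ring]
    rw [show ((((-δ-1)/2 : ℝ)) : ℂ) * (t:ℂ) = (((-δ-1)/2*t : ℝ) : ℂ) by push_cast; ring]
    rw [← Complex.ofReal_exp, ← Complex.ofReal_exp]
    rw [show ((((δ-1)/2 : ℝ)):ℂ) * ((Real.exp ((δ-1)/2*t) : ℝ):ℂ)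
          - ((((-δ-1)/2 : ℝ)):ℂ) * ((Real.exp ((-δ-1)/2*t) : ℝ):ℂ)
        = ((((δ-1)/2 * Real.exp ((δ-1)/2*t) - (-δ-1)/2 * Real.exp ((-δ-1)/2*t)) : ℝ) : ℂ) by
      push_cast; ring]
    rw [hμδ, ← Complex.ofReal_div, Complex.norm_real, Real.norm_eq_abs]
    exact caseA δ t hδ0 hδ1 ht
  · -- complex roots: 1 - 4r < 0
    have hre0 : μ.re = 0 := by
      by_contra h
      have him0 : μ.im = 0 := by
        have h2 : μ.re * μ.im = 0 := by linarith
        exact (mul_eq_zero.mp h2).resolve_left h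
      rw [him0] at hre
      nlinarith [sq_nonneg μ.re]
    set ω := μ.im with hω
    have hμω : μ = (ω:ℂ) * Complex.I := Complex.ext (by simp [hre0]) (by simp [hω])
    have hω0 : ω ≠ 0 := by
      intro h; apply hμ; rw [hμω, h]; simp
    have hl₁' : l₁ = ((ω:ℂ)*Complex.I - 1)/2 := by rw [hl₁, hμω]
    have hl₂' : l₂ = ((-((ω:ℂ)*Complex.I)) - 1)/2 := by rw [hl₂, hμω]
    rw [hl₁', hl₂', hμω, identB ω t hω0, Complex.norm_real, Real.norm_eq_abs]
    exact caseB ω t hω0 ht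
end

section
/- There exists a constant C > 0 such that for every real r > 0 with r ≠ 4, every t ≥ 0, and every pair of complex numbers λ₁ ≠ λ₂ with λ₁ + λ₂ = −r and λ₁·λ₂ = r, one has √r · |(exp(λ₁ t) − exp(λ₂ t))/(λ₁ − λ₂)| ≤ C. -/
/-- Any root of `λ² + rλ + r = 0` (given via sum/product with a distinct partner root)
has real part at most `-min 1 (r/2)`. -/
lemma root_re_le (r : ℝ) (hr : 0 < r) (hr4 : r ≠ 4) (l₁ l₂ : ℂ)
    (hne : l₁ ≠ l₂) (hsum : l₁ + l₂ = -(r : ℂ)) (hmul : l₁ * l₂ = (r : ℂ)) :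
    l₁.re ≤ -min 1 (r / 2) := by
  have hδsq : (l₁ - l₂) ^ 2 = ((r ^ 2 - 4 * r : ℝ) : ℂ) := by
    push_cast
    linear_combination (l₁ + l₂ - (r : ℂ)) * hsum - 4 * hmul
  set a : ℝ := (l₁ - l₂).re with ha
  set b : ℝ := (l₁ - l₂).im with hb
  have hre2 : a * a - b * b = r ^ 2 - 4 * r := by
    have := congrArg Complex.re hδsq
    simpa [pow_two, Complex.mul_re, ha, hb] using this
  have him2 : a * b + b * a = 0 := by
    have := congrArg Complex.im hδsq
    simpa [pow_two, Complex.mul_im, ha, hb] using this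
  have hsre : l₁.re + l₂.re = -r := by
    have := congrArg Complex.re hsum
    simpa using this
  rcases lt_or_gt_of_ne hr4 with h4 | h4
  · -- r < 4 : discriminant negative, roots conjugate, real part -r/2
    have hd : r ^ 2 - 4 * r < 0 := by nlinarith
    have ha0 : a = 0 := by
      by_contra hax
      have hb0 : b = 0 := by
        have : 2 * (a * b) = 0 := by linarith
        have hab : a * b = 0 := by linarith
        rcases mul_eq_zero.mp hab with h | h
        · exact absurd h hax
        · exact h
      rw [hb0] at hre2
      nlinarith [mul_self_nonneg a]
    have hdre : l₁.re - l₂.re = 0 := by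
      have : (l₁ - l₂).re = l₁.re - l₂.re := by simp
      rw [← this, ← ha, ha0]
    have : l₁.re = -r / 2 := by linarith
    rw [this]
    have : min 1 (r / 2) ≤ r / 2 := min_le_right _ _
    linarith
  · -- r > 4 : roots real, each ≤ -1
    have hd : 0 < r ^ 2 - 4 * r := by nlinarith
    have hb0 : b = 0 := by
      by_contra hbx
      have ha0 : a = 0 := by
        have : 2 * (a * b) = 0 := by linarith
        have hab : a * b = 0 := by linarith
        rcases mul_eq_zero.mp hab with h | h
        · exact h
        · exact absurd h hbx
      rw [ha0] at hre2
      nlinarith [mul_self_nonneg b]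
    -- imaginary parts
    have hsim : l₁.im + l₂.im = 0 := by
      have := congrArg Complex.im hsum
      simpa using this
    have hdim : l₁.im - l₂.im = 0 := by
      have : (l₁ - l₂).im = l₁.im - l₂.im := by simp
      rw [← this, ← hb, hb0]
    have him0 : l₁.im = 0 := by linarith
    -- quadratic equation for l₁
    have hq : l₁ ^ 2 + (r : ℂ) * l₁ + (r : ℂ) = 0 := by
      linear_combination l₁ * hsum - hmul
    have hqre : l₁.re ^ 2 + r * l₁.re + r = 0 := by
      have := congrArg Complex.re hq
      simpa [pow_two, Complex.mul_re, him0] using this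
    have hx1 : l₁.re ≤ -1 := by nlinarith
    have : min 1 (r / 2) ≤ 1 := min_le_left _ _
    linarith

/-- Uniform multiplier bound `√r·|(e^{λ₁t} − e^{λ₂t})/(λ₁ − λ₂)| ≤ C` for the roots of
`λ² + rλ + r = 0`. -/
theorem stmt_13 :
    ∃ C : ℝ, 0 < C ∧
      ∀ r : ℝ, 0 < r → r ≠ 4 → ∀ t : ℝ, 0 ≤ t →
        ∀ l₁ l₂ : ℂ, l₁ ≠ l₂ → l₁ + l₂ = -(r : ℂ) → l₁ * l₂ = (r : ℂ) →
          Real.sqrt r *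
              ‖(Complex.exp (l₁ * t) - Complex.exp (l₂ * t)) / (l₁ - l₂)‖
            ≤ C := by
  refine ⟨8, by norm_num, ?_⟩
  intro r hr hr4 t ht l₁ l₂ hne hsum hmul
  have hδne : l₁ - l₂ ≠ 0 := sub_ne_zero.mpr hne
  set D : ℝ := ‖l₁ - l₂‖ with hD
  have hDpos : 0 < D := by
    rw [hD]; exact (norm_pos_iff.mpr hδne)
  have hδsq : (l₁ - l₂) ^ 2 = ((r ^ 2 - 4 * r : ℝ) : ℂ) := by
    push_cast
    linear_combination (l₁ + l₂ - (r : ℂ)) * hsum - 4 * hmul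
  have hD2 : D ^ 2 = |r ^ 2 - 4 * r| := by
    rw [hD, ← norm_pow, hδsq, Complex.norm_real, Real.norm_eq_abs]
  -- real parts bounded
  have h1 : l₁.re ≤ -min 1 (r / 2) := root_re_le r hr hr4 l₁ l₂ hne hsum hmul
  have h2 : l₂.re ≤ -min 1 (r / 2) := by
    refine root_re_le r hr hr4 l₂ l₁ hne.symm ?_ ?_
    · rw [add_comm]; exact hsum
    · rw [mul_comm]; exact hmul
  have hαnn : 0 ≤ min 1 (r / 2) := le_min (by norm_num) (by linarith)
  have habs1 : ‖Complex.exp (l₁ * t)‖ = Real.exp (l₁.re * t) := by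
    rw [Complex.norm_exp]
    congr 1
    simp [Complex.mul_re]
  have habs2 : ‖Complex.exp (l₂ * t)‖ = Real.exp (l₂.re * t) := by
    rw [Complex.norm_exp]
    congr 1
    simp [Complex.mul_re]
  have hexp1 : Real.exp (l₁.re * t) ≤ 1 := by
    rw [← Real.exp_zero]
    apply Real.exp_le_exp.mpr
    nlinarith
  have hexp2 : Real.exp (l₂.re * t) ≤ 1 := by
    rw [← Real.exp_zero]
    apply Real.exp_le_exp.mpr
    nlinarith
  have hnum : ‖Complex.exp (l₁ * t) - Complex.exp (l₂ * t)‖ ≤ 2 := by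
    calc ‖Complex.exp (l₁ * t) - Complex.exp (l₂ * t)‖
        ≤ ‖Complex.exp (l₁ * t)‖ + ‖Complex.exp (l₂ * t)‖ :=
          norm_sub_le _ _
      _ ≤ 2 := by rw [habs1, habs2]; linarith
  rw [norm_div, ← hD]
  rcases le_or_gt 1 (|r - 4|) with hfar | hnear
  · -- far case : D ≥ √r, so bound by 2
    have hrD : Real.sqrt r ≤ D := by
      have hrle : r ≤ D ^ 2 := by
        rw [hD2]
        have : |r ^ 2 - 4 * r| = r * |r - 4| := by
          rw [show r ^ 2 - 4 * r = r * (r - 4) by ring, abs_mul, abs_of_pos hr]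
        rw [this]
        nlinarith
      calc Real.sqrt r ≤ Real.sqrt (D ^ 2) := Real.sqrt_le_sqrt hrle
        _ = D := Real.sqrt_sq hDpos.le
    calc Real.sqrt r * (‖Complex.exp (l₁ * t) - Complex.exp (l₂ * t)‖ / D)
        ≤ D * (2 / D) := by
          apply mul_le_mul hrD _ (by positivity) hDpos.le
          gcongr
      _ = 2 := by field_simp
      _ ≤ 8 := by norm_num
  · -- near case : 3 < r < 5, so min 1 (r/2) = 1
    have hr3 : 3 < r := by cases abs_lt.mp hnear; linarith
    have hr5 : r < 5 := by cases abs_lt.mp hnear; linarith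
    have hmin : min 1 (r / 2) = 1 := min_eq_left (by linarith)
    rw [hmin] at h1 h2
    have hrs : Real.sqrt r ≤ 3 := by
      calc Real.sqrt r ≤ Real.sqrt 9 := Real.sqrt_le_sqrt (by linarith)
        _ = 3 := by
            rw [show (9:ℝ) = 3 ^ 2 by norm_num, Real.sqrt_sq (by norm_num)]
    have hte : t * Real.exp (-t) ≤ 1 := by
      have ht1 : t ≤ Real.exp t := by
        have := Real.add_one_le_exp t
        linarith
      calc t * Real.exp (-t) ≤ Real.exp t * Real.exp (-t) :=
            mul_le_mul_of_nonneg_right ht1 (Real.exp_pos _).le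
        _ = 1 := by rw [← Real.exp_add]; simp
    -- key : E ≤ 2 * (t * exp (-t))
    have hkey : ‖Complex.exp (l₁ * t) - Complex.exp (l₂ * t)‖ / D
        ≤ 2 * (t * Real.exp (-t)) := by
      rcases le_or_gt (D * t) 1 with hsmall | hbig
      · -- factor e^{l₂ t}(e^{δt} − 1)
        have hfac : Complex.exp (l₁ * t) - Complex.exp (l₂ * t)
            = Complex.exp (l₂ * t) * (Complex.exp ((l₁ - l₂) * t) - 1) := by
          rw [mul_sub, mul_one, ← Complex.exp_add]
          ring_nf
        have habsδt : ‖(l₁ - l₂) * t‖ = D * t := by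
          rw [norm_mul, ← hD, Complex.norm_real, Real.norm_eq_abs, abs_of_nonneg ht]
        have hE1 : ‖Complex.exp ((l₁ - l₂) * t) - 1‖ ≤ 2 * (D * t) := by
          have := Complex.norm_exp_sub_one_le (x := (l₁ - l₂) * t) (by rw [habsδt]; exact hsmall)
          rwa [habsδt] at this
        have hE2 : Real.exp (l₂.re * t) ≤ Real.exp (-t) := by
          apply Real.exp_le_exp.mpr
          nlinarith
        have hnum2 : ‖Complex.exp (l₁ * t) - Complex.exp (l₂ * t)‖
            ≤ Real.exp (-t) * (2 * (D * t)) := by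
          rw [hfac, norm_mul, habs2]
          exact mul_le_mul hE2 hE1 (norm_nonneg _) (Real.exp_pos _).le
        rw [div_le_iff₀ hDpos]
        calc ‖Complex.exp (l₁ * t) - Complex.exp (l₂ * t)‖
            ≤ Real.exp (-t) * (2 * (D * t)) := hnum2
          _ = 2 * (t * Real.exp (-t)) * D := by ring
      · -- |δ|t large : use 1/D ≤ t
        have htpos : 0 < t := by
          by_contra hx
          push_neg at hx
          have : t = 0 := le_antisymm hx ht
          rw [this, mul_zero] at hbig
          linarith
        have hnum3 : ‖Complex.exp (l₁ * t) - Complex.exp (l₂ * t)‖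
            ≤ 2 * Real.exp (-t) := by
          have e1 : Real.exp (l₁.re * t) ≤ Real.exp (-t) := by
            apply Real.exp_le_exp.mpr; nlinarith
          have e2 : Real.exp (l₂.re * t) ≤ Real.exp (-t) := by
            apply Real.exp_le_exp.mpr; nlinarith
          calc ‖Complex.exp (l₁ * t) - Complex.exp (l₂ * t)‖
              ≤ ‖Complex.exp (l₁ * t)‖ + ‖Complex.exp (l₂ * t)‖ :=
                norm_sub_le _ _
            _ ≤ 2 * Real.exp (-t) := by rw [habs1, habs2]; linarith
        have hDt : 1 / D ≤ t := by
          rw [div_le_iff₀ hDpos]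
          nlinarith
        calc ‖Complex.exp (l₁ * t) - Complex.exp (l₂ * t)‖ / D
            ≤ (2 * Real.exp (-t)) / D := by gcongr
          _ = 2 * Real.exp (-t) * (1 / D) := by ring
          _ ≤ 2 * Real.exp (-t) * t := by
              apply mul_le_mul_of_nonneg_left hDt (by positivity)
          _ = 2 * (t * Real.exp (-t)) := by ring
    calc Real.sqrt r * (‖Complex.exp (l₁ * t) - Complex.exp (l₂ * t)‖ / D)
        ≤ 3 * (2 * (t * Real.exp (-t))) := by
          apply mul_le_mul hrs hkey (by positivity) (by norm_num)
      _ ≤ 3 * (2 * 1) := by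
          apply mul_le_mul_of_nonneg_left _ (by norm_num)
          apply mul_le_mul_of_nonneg_left hte (by norm_num)
      _ ≤ 8 := by norm_num
end

section
/- There exists a constant C > 0 such that for every real r > 0 with r ≠ 4, every t ≥ 0, and every pair of complex numbers λ₁ ≠ λ₂ with λ₁ + λ₂ = −r and λ₁·λ₂ = r, one has |(λ₁·exp(λ₁ t) − λ₂·exp(λ₂ t))/(λ₁ − λ₂)| ≤ C. -/
lemma auxB {x : ℝ} (_hx : 0 ≤ x) : x * Real.exp (-x) ≤ 1 := by
  have h1 : x ≤ Real.exp x := (Real.add_one_le_exp x).trans' (by linarith)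
  have h2 : 0 < Real.exp (-x) := Real.exp_pos _
  calc x * Real.exp (-x) ≤ Real.exp x * Real.exp (-x) := by nlinarith
    _ = 1 := by rw [← Real.exp_add]; simp

lemma auxA (θ : ℝ) : ‖Complex.exp (θ * Complex.I) - 1‖ ≤ |θ| := by
  have hsq : (‖Complex.exp (θ * Complex.I) - 1‖)^2 = 2 - 2 * Real.cos θ := by
    rw [Complex.sq_norm, Complex.exp_mul_I, Complex.normSq_apply]
    simp [Complex.cos_ofReal_re, Complex.sin_ofReal_re]
    ring_nf
    nlinarith [Real.sin_sq_add_cos_sq θ]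
  have h1 : 2 - 2 * Real.cos θ ≤ θ^2 := by
    have := Real.sin_sq_le_sq (x := θ/2)
    have hc := Real.cos_two_mul (θ/2)
    rw [show 2*(θ/2) = θ by ring] at hc
    have := Real.sin_sq_add_cos_sq (θ/2)
    nlinarith
  have h2 := norm_nonneg (Complex.exp (θ * Complex.I) - 1)
  nlinarith [abs_nonneg θ, sq_abs θ]

lemma auxMVT0 {a b t : ℝ} (ht : 0 ≤ t) (hba : b < a) (ha : a < 0) :
    |(a * Real.exp (a*t) - b * Real.exp (b*t)) / (a - b)| ≤ 2 := by
  set F : ℝ → ℝ := fun x => x * Real.exp (x*t) with hF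
  set F' : ℝ → ℝ := fun x => 1 * Real.exp (x*t) + x * (Real.exp (x*t) * t) with hF'
  have hder : ∀ x : ℝ, HasDerivAt F (F' x) x := by
    intro x
    have h : HasDerivAt F (1 * Real.exp (x*t) + x * (Real.exp (x*t) * (1*t))) x :=
      (hasDerivAt_id x).mul (((hasDerivAt_id x).mul_const t).exp)
    simpa [hF', one_mul] using h
  obtain ⟨c, hc, hceq⟩ := exists_hasDerivAt_eq_slope F F' hba
    (fun x _ => (hder x).continuousAt.continuousWithinAt) (fun x _ => hder x)
  have hc0 : c < 0 := hc.2.trans ha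
  have heq : (a * Real.exp (a*t) - b * Real.exp (b*t)) / (a - b) = F' c := hceq.symm
  rw [heq]
  show |1 * Real.exp (c*t) + c * (Real.exp (c*t) * t)| ≤ 2
  have he1 : Real.exp (c*t) ≤ 1 := Real.exp_le_one_iff.mpr (by nlinarith)
  have he2 : (-(c*t)) * Real.exp (-(-(c*t))) ≤ 1 := auxB (by nlinarith)
  rw [neg_neg] at he2
  have hpos : 0 < Real.exp (c*t) := Real.exp_pos _
  have h3 : c * t * Real.exp (c*t) ≤ 0 :=
    mul_nonpos_of_nonpos_of_nonneg (by nlinarith) hpos.le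
  rw [abs_le]
  constructor <;> nlinarith

lemma auxMVT {a b t : ℝ} (ht : 0 ≤ t) (hab : a ≠ b) (ha : a < 0) (hb : b < 0) :
    |(a * Real.exp (a*t) - b * Real.exp (b*t)) / (a - b)| ≤ 2 := by
  rcases hab.lt_or_gt with h | h
  · have hsym : (a * Real.exp (a*t) - b * Real.exp (b*t)) / (a - b)
        = (b * Real.exp (b*t) - a * Real.exp (a*t)) / (b - a) := by
      rw [← neg_div_neg_eq]; ring_nf
    rw [hsym]
    exact auxMVT0 ht h hb
  · exact auxMVT0 ht h ha

/-- Uniform bound `|(λ₁e^{λ₁t} − λ₂e^{λ₂t})/(λ₁ − λ₂)| ≤ C` for the roots of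
`λ² + rλ + r = 0`. -/
theorem stmt_14 :
    ∃ C : ℝ, 0 < C ∧
      ∀ r : ℝ, 0 < r → r ≠ 4 → ∀ t : ℝ, 0 ≤ t →
        ∀ l₁ l₂ : ℂ, l₁ ≠ l₂ → l₁ + l₂ = -(r : ℂ) → l₁ * l₂ = (r : ℂ) →
          ‖(l₁ * Complex.exp (l₁ * t) - l₂ * Complex.exp (l₂ * t)) / (l₁ - l₂)‖
            ≤ C := by
  refine ⟨2, by norm_num, ?_⟩
  intro r hr hr4 t ht l₁ l₂ hne hsum hprod
  set w : ℂ := l₁ - l₂ with hw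
  have hwne : w ≠ 0 := sub_ne_zero.mpr hne
  have hwsq : w^2 = ((r^2 - 4*r : ℝ) : ℂ) := by
    push_cast
    linear_combination (l₁ + l₂ - (r:ℂ)) * hsum - 4 * hprod
  have him : w.re * w.im + w.im * w.re = 0 := by
    have h := congrArg Complex.im hwsq
    rwa [sq, Complex.mul_im, Complex.ofReal_im] at h
  have hre2 : w.re * w.re - w.im * w.im = r^2 - 4*r := by
    have h := congrArg Complex.re hwsq
    rwa [sq, Complex.mul_re, Complex.ofReal_re] at h
  have hl1 : l₁ = (-(r:ℂ) + w)/2 := by rw [hw]; linear_combination hsum/2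
  have hl2 : l₂ = (-(r:ℂ) - w)/2 := by rw [hw]; linear_combination hsum/2
  rcases lt_or_gt_of_ne hr4 with hlt | hgt
  · -- complex conjugate roots : r < 4
    have hdisc : r^2 - 4*r < 0 := by nlinarith
    have hre0 : w.re = 0 := by
      by_contra h
      have him0 : w.im = 0 := by
        rcases mul_eq_zero.mp (by linarith : w.re * w.im = 0) with h' | h'
        · exact absurd h' h
        · exact h'
      rw [him0] at hre2
      nlinarith [sq_nonneg w.re]
    set c : ℝ := w.im with hc
    have hcne : c ≠ 0 := by
      intro h0
      apply hwne
      apply Complex.ext <;> simp [hre0, ← hc, h0]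
    have hwc : w = (c:ℂ) * Complex.I := by
      apply Complex.ext <;> simp [hre0, ← hc]
    set e₁ := Complex.exp (l₁ * t) with he₁
    set e₂ := Complex.exp (l₂ * t) with he₂
    have hid : (l₁ * e₁ - l₂ * e₂)/w
        = (-(r:ℂ)/2) * ((e₁ - e₂)/w) + (e₁ + e₂)/2 := by
      have h : l₁ * e₁ - l₂ * e₂
          = (-(r:ℂ)/2) * (e₁ - e₂) + (w/2) * (e₁ + e₂) := by
        linear_combination e₁ * hl1 - e₂ * hl2
      rw [h]
      field_simp
    rw [hid]
    have hsplit : e₁ = e₂ * Complex.exp (((c*t : ℝ):ℂ) * Complex.I) := by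
      rw [he₁, he₂, ← Complex.exp_add]
      congr 1
      rw [show ((c*t : ℝ):ℂ) * Complex.I = w * t by rw [hwc]; push_cast; ring, hw]
      ring
    have habsw : ‖w‖ = |c| := by rw [hwc]; simp
    have habse₂ : ‖e₂‖ = Real.exp (-(r*t)/2) := by
      rw [he₂, Complex.norm_exp]
      congr 1
      rw [hl2, hwc]
      simp [Complex.div_re, Complex.normSq_apply]
      ring
    have habse₁ : ‖e₁‖ = Real.exp (-(r*t)/2) := by
      rw [hsplit, norm_mul, habse₂, Complex.norm_exp]
      simp
    have hdiff : ‖(e₁ - e₂)/w‖ ≤ Real.exp (-(r*t)/2) * t := by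
      rw [norm_div, habsw]
      rw [hsplit, show e₂ * Complex.exp (((c*t : ℝ):ℂ) * Complex.I) - e₂
          = e₂ * (Complex.exp (((c*t : ℝ):ℂ) * Complex.I) - 1) by ring, norm_mul]
      have := auxA (c*t)
      have hcpos : 0 < |c| := abs_pos.mpr hcne
      rw [habse₂]
      rw [div_le_iff₀ hcpos]
      calc Real.exp (-(r*t)/2) * ‖Complex.exp (((c*t : ℝ):ℂ) * Complex.I) - 1‖
          ≤ Real.exp (-(r*t)/2) * |c*t| := by
            exact mul_le_mul_of_nonneg_left this (Real.exp_nonneg _)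
        _ = Real.exp (-(r*t)/2) * t * |c| := by
            rw [abs_mul, abs_of_nonneg ht]; ring
    calc ‖(-(r:ℂ)/2) * ((e₁ - e₂)/w) + (e₁ + e₂)/2‖
        ≤ ‖(-(r:ℂ)/2) * ((e₁ - e₂)/w)‖ + ‖(e₁ + e₂)/2‖ :=
          norm_add_le _ _
      _ ≤ (r/2) * (Real.exp (-(r*t)/2) * t) + 1 := by
          gcongr
          · rw [norm_mul]
            have : ‖-(r:ℂ)/2‖ = r/2 := by
              rw [norm_div, norm_neg]
              simp [abs_of_pos hr]
            rw [this]
            exact mul_le_mul_of_nonneg_left hdiff (by linarith)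
          · rw [norm_div]
            simp only [Complex.norm_two]
            have : ‖e₁ + e₂‖ ≤ 2 := by
              calc ‖e₁ + e₂‖ ≤ ‖e₁‖ + ‖e₂‖ :=
                    norm_add_le _ _
                _ ≤ 2 := by
                    rw [habse₁, habse₂]
                    have := Real.exp_le_one_iff.mpr (by nlinarith : -(r*t)/2 ≤ 0)
                    linarith
            linarith [this]
      _ ≤ 2 := by
          have hx : (r*t/2) * Real.exp (-(r*t/2)) ≤ 1 := auxB (by nlinarith)
          have : (r/2) * (Real.exp (-(r*t)/2) * t) = (r*t/2) * Real.exp (-(r*t/2)) := by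
            rw [show -(r*t)/2 = -(r*t/2) by ring]; ring
          linarith [this ▸ hx]
  · -- real roots : r > 4
    have hdisc : 0 < r^2 - 4*r := by nlinarith
    have him0 : w.im = 0 := by
      by_contra h
      have hre0 : w.re = 0 := by
        rcases mul_eq_zero.mp (by linarith : w.re * w.im = 0) with h' | h'
        · exact h'
        · exact absurd h' h
      rw [hre0] at hre2
      nlinarith [sq_nonneg w.im]
    set c : ℝ := w.re with hc
    have hcne : c ≠ 0 := by
      intro h0
      exact hwne (Complex.ext (by simp [← hc, h0]) (by simp [him0]))
    have hwc : w = (c:ℂ) := Complex.ext (by simp [← hc]) (by simp [him0])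
    set a : ℝ := (-r + c)/2 with ha
    set b : ℝ := (-r - c)/2 with hb
    have hsumr : a + b = -r := by rw [ha, hb]; ring
    have hl1' : l₁ = (a:ℂ) := by rw [hl1, hwc, ha]; push_cast; ring
    have hl2' : l₂ = (b:ℂ) := by rw [hl2, hwc, hb]; push_cast; ring
    have hprodr : a * b = r := by
      have : ((a*b : ℝ):ℂ) = ((r:ℝ):ℂ) := by push_cast; rw [← hl1', ← hl2']; exact hprod
      exact_mod_cast this
    have hane : a ≠ b := fun h => hcne (by rw [ha, hb] at h; linarith)
    have haneg : a < 0 := by nlinarith [hprodr, hsumr, hr, sq_nonneg a, sq_nonneg b]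
    have hbneg : b < 0 := by nlinarith [hprodr, hsumr, hr, sq_nonneg a, sq_nonneg b]
    have hcast : (l₁ * Complex.exp (l₁ * t) - l₂ * Complex.exp (l₂ * t)) / (l₁ - l₂)
        = (((a * Real.exp (a*t) - b * Real.exp (b*t)) / (a - b) : ℝ) : ℂ) := by
      rw [hl1', hl2']
      push_cast
      ring_nf
    rw [hcast, Complex.norm_real, Real.norm_eq_abs]
    exact auxMVT ht hane haneg hbneg
end

section
/- Let n and γ be positive integers and let r > n be a real number. Define f : ℝⁿ → ℝ by f(x) = (1+|x|²)^{−r/2}, and let Δ denote the Laplace operator on ℝⁿ (the sum of the second partial derivatives along an orthonormal basis). Then there exists a constant C > 0 such that for all x ∈ ℝⁿ, |Δ^γ f(x)| ≤ C·(1+|x|²)^{−(r+2γ)/2}, where Δ^γ denotes the γ-fold iterate of Δ. -/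
/-- The Laplace operator on `ℝⁿ`: the sum of the second partial derivatives along the
standard orthonormal basis of `EuclideanSpace ℝ (Fin n)`. -/
noncomputable def laplaceOp (n : ℕ) (f : EuclideanSpace ℝ (Fin n) → ℝ) :
    EuclideanSpace ℝ (Fin n) → ℝ := fun x =>
  ∑ i : Fin n,
    iteratedFDeriv ℝ 2 f x ![EuclideanSpace.single i (1 : ℝ), EuclideanSpace.single i (1 : ℝ)]

namespace Stmt19

variable {n : ℕ}

noncomputable def Fa (n : ℕ) (a : ℝ) : EuclideanSpace ℝ (Fin n) → ℝ :=
  fun x => (1 + ‖x‖ ^ 2) ^ a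

lemma base_pos (x : EuclideanSpace ℝ (Fin n)) : 0 < 1 + ‖x‖ ^ 2 := by positivity

lemma contDiff_Fa (a : ℝ) : ContDiff ℝ ⊤ (Fa n a) :=
  (contDiff_const.add (contDiff_norm_sq ℝ)).rpow_const_of_ne fun x => (base_pos x).ne'

lemma hasFDerivAt_Fa (a : ℝ) (x : EuclideanSpace ℝ (Fin n)) :
    HasFDerivAt (Fa n a) ((2 * a * (1 + ‖x‖ ^ 2) ^ (a - 1)) • innerSL ℝ x) x := by
  have h1 : HasFDerivAt (fun y : EuclideanSpace ℝ (Fin n) => 1 + ‖y‖ ^ 2)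
      ((2 : ℕ) • innerSL ℝ x) x :=
    ((hasStrictFDerivAt_norm_sq x).hasFDerivAt).const_add 1
  have h2 : HasDerivAt (fun t : ℝ => t ^ a) (a * (1 + ‖x‖ ^ 2) ^ (a - 1)) (1 + ‖x‖ ^ 2) :=
    Real.hasDerivAt_rpow_const (Or.inl (base_pos x).ne')
  have h3 := h2.comp_hasFDerivAt x h1
  refine h3.congr_fderiv ?_
  ext v
  simp [smul_smul]
  ring

lemma fderiv_Fa (a : ℝ) :
    fderiv ℝ (Fa n a) = fun x => (2 * a * (1 + ‖x‖ ^ 2) ^ (a - 1)) • innerSL ℝ x :=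
  funext fun x => (hasFDerivAt_Fa a x).fderiv

lemma second_deriv_Fa (a : ℝ) (x : EuclideanSpace ℝ (Fin n))
    (v w : EuclideanSpace ℝ (Fin n)) :
    iteratedFDeriv ℝ 2 (Fa n a) x ![v, w]
      = 2 * a * (1 + ‖x‖ ^ 2) ^ (a - 1) * (inner ℝ v w : ℝ)
        + 4 * a * (a - 1) * (1 + ‖x‖ ^ 2) ^ (a - 2) * (inner ℝ x v : ℝ) * (inner ℝ x w : ℝ) := by
  rw [iteratedFDeriv_two_apply, fderiv_Fa]
  have hc : HasFDerivAt (fun y : EuclideanSpace ℝ (Fin n) => 2 * a * (1 + ‖y‖ ^ 2) ^ (a - 1))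
      ((2 * a) • ((2 * (a - 1) * (1 + ‖x‖ ^ 2) ^ (a - 1 - 1)) • innerSL ℝ x)) x :=
    (hasFDerivAt_Fa (a - 1) x).const_mul (2 * a)
  have hi : HasFDerivAt (fun y : EuclideanSpace ℝ (Fin n) => innerSL ℝ y) (innerSL ℝ) x :=
    (innerSL ℝ).hasFDerivAt
  have H := hc.smul hi
  rw [(show HasFDerivAt (fun y : EuclideanSpace ℝ (Fin n) =>
    (2 * a * (1 + ‖y‖ ^ 2) ^ (a - 1)) • innerSL ℝ y) _ x from H).fderiv]
  have : a - 1 - 1 = a - 2 := by ring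
  rw [this]
  simp only [ContinuousLinearMap.add_apply, ContinuousLinearMap.smul_apply,
    ContinuousLinearMap.smulRight_apply, innerSL_apply_apply, smul_eq_mul,
    Matrix.cons_val_zero, Matrix.cons_val_one, Matrix.head_cons]
  erw [innerSL_apply_apply]
  ring

end Stmt19

namespace Stmt19

lemma norm_sq_eq_sum (x : EuclideanSpace ℝ (Fin n)) : ‖x‖ ^ 2 = ∑ i, x i ^ 2 := by
  rw [EuclideanSpace.norm_eq, Real.sq_sqrt (by positivity)]
  simp [sq_abs]

lemma laplace_Fa (a : ℝ) : laplaceOp n (Fa n a) = fun x =>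
    (2 * a * n + 4 * a * (a - 1)) * Fa n (a - 1) x + (-(4 * a * (a - 1))) * Fa n (a - 2) x := by
  funext x
  unfold laplaceOp
  have key : ∀ i : Fin n,
      iteratedFDeriv ℝ 2 (Fa n a) x ![EuclideanSpace.single i (1:ℝ), EuclideanSpace.single i 1]
        = 2 * a * (1 + ‖x‖ ^ 2) ^ (a - 1)
          + 4 * a * (a - 1) * (1 + ‖x‖ ^ 2) ^ (a - 2) * (x i) ^ 2 := by
    intro i
    rw [second_deriv_Fa]
    simp [EuclideanSpace.inner_single_right, EuclideanSpace.inner_single_left, real_inner_comm]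
    ring
  rw [Finset.sum_congr rfl fun i _ => key i]
  rw [Finset.sum_add_distrib, Finset.sum_const, ← Finset.mul_sum, ← norm_sq_eq_sum]
  have h : (1 + ‖x‖ ^ 2) ^ (a - 1) = (1 + ‖x‖ ^ 2) ^ (a - 2) * (1 + ‖x‖ ^ 2) := by
    rw [← Real.rpow_add_one (base_pos x).ne']
    ring_nf
  simp only [Fa, Finset.card_univ, Fintype.card_fin, nsmul_eq_mul]
  linear_combination (-(4 * a * (a - 1))) * h

end Stmt19
namespace Stmt19

lemma laplace_sum {ι : Type} (s : Finset ι) (g : ι → EuclideanSpace ℝ (Fin n) → ℝ)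
    (hg : ∀ j ∈ s, ContDiff ℝ 2 (g j)) :
    laplaceOp n (fun x => ∑ j ∈ s, g j x) = fun x => ∑ j ∈ s, laplaceOp n (g j) x := by
  funext x
  unfold laplaceOp
  rw [iteratedFDeriv_sum hg]
  simp only [Finset.sum_apply, ContinuousMultilinearMap.sum_apply]
  rw [Finset.sum_comm]

lemma laplace_smul (c : ℝ) (g : EuclideanSpace ℝ (Fin n) → ℝ) (hg : ContDiff ℝ 2 g) :
    laplaceOp n (fun x => c * g x) = fun x => c * laplaceOp n g x := by
  funext x
  unfold laplaceOp
  have h1 : (fun x => c * g x) = c • g := rfl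
  rw [h1]
  simp only [iteratedFDeriv_const_smul_apply hg.contDiffAt, ContinuousMultilinearMap.smul_apply,
    smul_eq_mul, Finset.mul_sum]

lemma rep (r : ℝ) (k : ℕ) : ∃ (ι : Type) (s : Finset ι) (c e : ι → ℝ),
    (∀ j ∈ s, e j ≤ -(r / 2) - k) ∧
    ((laplaceOp n)^[k] (Fa n (-(r / 2))) = fun x => ∑ j ∈ s, c j * Fa n (e j) x) := by
  induction k with
  | zero =>
    exact ⟨Unit, Finset.univ, fun _ => 1, fun _ => -(r / 2), by simp, by
      funext x; simp⟩
  | succ k ih =>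
    obtain ⟨ι, s, c, e, he, hrep⟩ := ih
    refine ⟨ι × Bool, s ×ˢ Finset.univ,
      fun p => if p.2 then c p.1 * (2 * e p.1 * n + 4 * e p.1 * (e p.1 - 1))
        else c p.1 * (-(4 * e p.1 * (e p.1 - 1))),
      fun p => if p.2 then e p.1 - 1 else e p.1 - 2, ?_, ?_⟩
    · rintro ⟨j, b⟩ hj
      have hb := he j (Finset.mem_product.mp hj).1
      push_cast
      cases b <;> simp <;> linarith
    · rw [Function.iterate_succ_apply', hrep,
        laplace_sum s _ (fun j _ => contDiff_const.mul ((contDiff_Fa (e j)).of_le le_top))]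
      funext x
      rw [Finset.sum_product]
      refine Finset.sum_congr rfl fun j _ => ?_
      rw [congrFun (laplace_smul (c j) _ ((contDiff_Fa (e j)).of_le le_top)) x,
        congrFun (laplace_Fa (e j)) x]
      simp [Fintype.sum_bool]
      ring

end Stmt19


/-- Integer-order case of Lemma 4.1: for `r > n` and `f(x) = (1+|x|²)^{−r/2}`, the
`γ`-fold iterated Laplacian of `f` is bounded by `C·(1+|x|²)^{−(r+2γ)/2}`. -/
theorem stmt_19 (n γ : ℕ) (hn : 0 < n) (hγ : 0 < γ) (r : ℝ) (hr : (n : ℝ) < r) :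
    ∃ C : ℝ, 0 < C ∧ ∀ x : EuclideanSpace ℝ (Fin n),
      |(laplaceOp n)^[γ] (fun y => (1 + ‖y‖ ^ 2) ^ (-(r / 2))) x|
        ≤ C * (1 + ‖x‖ ^ 2) ^ (-((r + 2 * (γ : ℝ)) / 2)) := by
  obtain ⟨ι, s, c, e, he, hrep⟩ := Stmt19.rep (n := n) r γ
  refine ⟨(∑ j ∈ s, |c j|) + 1, by positivity, fun x => ?_⟩
  have hXpos : (0 : ℝ) < (1 + ‖x‖ ^ 2) ^ (-((r + 2 * (γ : ℝ)) / 2)) :=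
    Real.rpow_pos_of_pos (Stmt19.base_pos x) _
  have hf : (fun y : EuclideanSpace ℝ (Fin n) => (1 + ‖y‖ ^ 2) ^ (-(r / 2)))
      = Stmt19.Fa n (-(r / 2)) := rfl
  rw [hf, hrep]
  have hexp : -(r / 2) - (γ : ℝ) = -((r + 2 * (γ : ℝ)) / 2) := by ring
  calc |∑ j ∈ s, c j * Stmt19.Fa n (e j) x|
      ≤ ∑ j ∈ s, |c j * Stmt19.Fa n (e j) x| := Finset.abs_sum_le_sum_abs _ _
    _ ≤ ∑ j ∈ s, |c j| * (1 + ‖x‖ ^ 2) ^ (-((r + 2 * (γ : ℝ)) / 2)) := by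
        refine Finset.sum_le_sum fun j hj => ?_
        rw [abs_mul]
        refine mul_le_mul_of_nonneg_left ?_ (abs_nonneg _)
        simp only [Stmt19.Fa]
        rw [abs_of_nonneg (Real.rpow_nonneg (Stmt19.base_pos x).le _), ← hexp]
        exact Real.rpow_le_rpow_of_exponent_le (le_add_of_nonneg_right (sq_nonneg _)) (he j hj)
    _ = (∑ j ∈ s, |c j|) * (1 + ‖x‖ ^ 2) ^ (-((r + 2 * (γ : ℝ)) / 2)) :=
        (Finset.sum_mul _ _ _).symm
    _ ≤ ((∑ j ∈ s, |c j|) + 1) * (1 + ‖x‖ ^ 2) ^ (-((r + 2 * (γ : ℝ)) / 2)) := by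
        refine mul_le_mul_of_nonneg_right (by linarith) hXpos.le
end
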